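/- Let p be a prime and let a, d be integers with p | a and p ∤ d. The number of pairs (b,c) ∈ (ℤ/p²ℤ)² such that the binary cubic form ax³ + bx²y + cxy² + dy³ over ℤ/p²ℤ reduces mod p to a form with a triple root at (1,0) — i.e., p | b and p | c — and satisfies Dedekind's criterion, equals p² if p exactly divides a (ν_p(a) = 1), and 0 if p² | a. -/
import Mathlib


open scoped Classical

private lemma dvd_iff_val' (p : ℕ) (hp : p.Prime) (x : ZMod (p^2)) :
    (p : ZMod (p^2)) ∣ x ↔ p ∣ x.val := by
  haveI : NeZero (p^2) := ⟨pow_ne_zero 2 hp.ne_zero⟩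
  have hlt : p < p^2 := by nlinarith [hp.two_le]
  constructor
  · rintro ⟨z, rfl⟩
    rw [ZMod.val_mul, ZMod.val_natCast, Nat.mod_eq_of_lt hlt]
    exact (Nat.dvd_mod_iff (dvd_pow_self p two_ne_zero)).mpr ⟨z.val, rfl⟩
  · intro ⟨k, hk⟩
    refine ⟨(k : ZMod (p^2)), ?_⟩
    have hb : ((x.val : ℕ) : ZMod (p^2)) = x := by
      simp [ZMod.natCast_val, ZMod.cast_id]
    rw [← hb, hk]
    push_cast
    ring

private lemma pmul_zero_iff' (p : ℕ) (hp : p.Prime) (x : ZMod (p^2)) :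
    (p : ZMod (p^2)) * x = 0 ↔ p ∣ x.val := by
  haveI : NeZero (p^2) := ⟨pow_ne_zero 2 hp.ne_zero⟩
  have h : (p : ZMod (p^2)) * x = ((p * x.val : ℕ) : ZMod (p^2)) := by
    push_cast
    rw [ZMod.natCast_val, ZMod.cast_id]
  rw [h, ZMod.natCast_eq_zero_iff]
  constructor
  · rintro ⟨k, hk⟩
    exact ⟨k, Nat.eq_of_mul_eq_mul_left hp.pos (by rw [hk]; ring)⟩
  · rintro ⟨k, hk⟩
    exact ⟨k, by rw [hk]; ring⟩

private lemma phi_zero_iff' (p : ℕ) (hp : p.Prime) (x : ZMod (p^2)) :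
    ZMod.castHom (dvd_pow_self p two_ne_zero) (ZMod p) x = 0 ↔ p ∣ x.val := by
  haveI : NeZero p := ⟨hp.ne_zero⟩
  rw [ZMod.castHom_apply, ← ZMod.natCast_val, ZMod.natCast_eq_zero_iff]

private noncomputable def multmap' (p : ℕ) :
    ZMod p → {x : ZMod (p^2) // (p : ZMod (p^2)) ∣ x} :=
  fun y => ⟨((p * y.val : ℕ) : ZMod (p^2)),
    ⟨((y.val : ℕ) : ZMod (p^2)), by push_cast; ring⟩⟩

private lemma card_mult' (p : ℕ) (hp : p.Prime) :
    Nat.card {x : ZMod (p^2) // (p : ZMod (p^2)) ∣ x} = p := by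
  haveI : NeZero (p^2) := ⟨pow_ne_zero 2 hp.ne_zero⟩
  haveI : NeZero p := ⟨hp.ne_zero⟩
  have hlt : ∀ y : ZMod p, p * y.val < p^2 := by
    intro y
    have := ZMod.val_lt y
    nlinarith
  have hbij : Function.Bijective (multmap' p) := by
    constructor
    · intro y₁ y₂ h
      have h' : (((p * y₁.val : ℕ) : ZMod (p^2))).val = (((p * y₂.val : ℕ) : ZMod (p^2))).val :=
        congrArg (fun z => (z : ZMod (p^2)).val) (congrArg Subtype.val h)
      rw [ZMod.val_natCast, ZMod.val_natCast, Nat.mod_eq_of_lt (hlt y₁),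
        Nat.mod_eq_of_lt (hlt y₂)] at h'
      exact ZMod.val_injective p (Nat.eq_of_mul_eq_mul_left hp.pos h')
    · rintro ⟨x, hx⟩
      obtain ⟨k, hk⟩ := (dvd_iff_val' p hp x).mp hx
      have hkp : k < p := by
        have := ZMod.val_lt x
        rw [hk] at this
        by_contra hc
        push_neg at hc
        nlinarith
      refine ⟨(k : ZMod p), Subtype.ext ?_⟩
      show ((p * (k : ZMod p).val : ℕ) : ZMod (p^2)) = x
      rw [ZMod.val_natCast, Nat.mod_eq_of_lt hkp]
      have hb : ((x.val : ℕ) : ZMod (p^2)) = x := by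
        simp [ZMod.natCast_val, ZMod.cast_id]
      rw [← hb, hk]
  rw [← Nat.card_eq_of_bijective (multmap' p) hbij, Nat.card_eq_fintype_card, ZMod.card]

/-- Dedekind's criterion for a binary cubic form `ax³ + bx²y + cxy² + dy³` over a
commutative ring with respect to a "uniformizer" `π`: the form is primitive, and no
unimodular change of variables `(x,y) ↦ (αx + γy, βx + δy)` makes the `x³`-coefficient
divisible by `π²` and the `x²y`-coefficient divisible by `π`. -/
def SatisfiesDedekind {R : Type*} [CommRing R] (π a b c d : R) : Prop :=
  (¬ (π ∣ a ∧ π ∣ b ∧ π ∣ c ∧ π ∣ d)) ∧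
  ¬ ∃ α β γ δ : R, α * δ - β * γ = 1 ∧
      π ^ 2 ∣ (a * α ^ 3 + b * α ^ 2 * β + c * α * β ^ 2 + d * β ^ 3) ∧
      π ∣ (3 * a * α ^ 2 * γ + b * (α ^ 2 * δ + 2 * α * β * γ)
            + c * (β ^ 2 * γ + 2 * α * β * δ) + 3 * d * β ^ 2 * δ)

private lemma dedekind_of_exact' (p : ℕ) (hp : p.Prime) (a d : ℤ)
    (hpa : (p : ℤ) ∣ a) (hp2a : ¬ (p : ℤ) ^ 2 ∣ a) (hpd : ¬ (p : ℤ) ∣ d)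
    (b c : ZMod (p ^ 2)) (hb : (p : ZMod (p ^ 2)) ∣ b) (hc : (p : ZMod (p ^ 2)) ∣ c) :
    SatisfiesDedekind (p : ZMod (p ^ 2)) (a : ZMod (p ^ 2)) b c (d : ZMod (p ^ 2)) := by
  haveI : Fact p.Prime := ⟨hp⟩
  haveI : NeZero (p^2) := ⟨pow_ne_zero 2 hp.ne_zero⟩
  set φ := ZMod.castHom (dvd_pow_self p two_ne_zero) (ZMod p) with hφ
  have hφp : φ (p : ZMod (p^2)) = 0 := by
    rw [map_natCast, ZMod.natCast_self]
  have hpi2 : (p : ZMod (p^2))^2 = 0 := by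
    rw [← Nat.cast_pow, ZMod.natCast_self]
  obtain ⟨a₀, ha₀⟩ := hpa
  have haR : (a : ZMod (p^2)) = (p : ZMod (p^2)) * (a₀ : ZMod (p^2)) := by
    rw [ha₀]; push_cast; ring
  constructor
  · rintro ⟨-, -, -, hd⟩
    apply hpd
    obtain ⟨k, hk⟩ := hd
    have : φ ((d : ZMod (p^2))) = 0 := by rw [hk, map_mul, hφp, zero_mul]
    rw [map_intCast] at this
    exact (ZMod.intCast_zmod_eq_zero_iff_dvd d p).mp this
  · rintro ⟨α, β, γ, δ, huni, h1, -⟩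
    obtain ⟨b', rfl⟩ := hb
    obtain ⟨c', rfl⟩ := hc
    rw [hpi2, zero_dvd_iff] at h1
    -- reduce mod p : get φ β = 0
    have hdp : (d : ZMod p) ≠ 0 := fun h =>
      hpd ((ZMod.intCast_zmod_eq_zero_iff_dvd d p).mp h)
    have hβ : φ β = 0 := by
      have h1' := congrArg φ h1
      simp only [map_add, map_mul, map_pow, map_zero, map_intCast, hφp] at h1'
      have hd3 : (d : ZMod p) * (φ β)^3 = 0 := by
        have haφ : φ ((a : ℤ) : ZMod (p^2)) = 0 := by
          rw [haR, map_mul, hφp, zero_mul]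
        rw [map_intCast] at haφ
        linear_combination h1' - (φ α)^3 * haφ
      have := mul_eq_zero.mp hd3
      rcases this with h | h
      · exact absurd h hdp
      · exact pow_eq_zero_iff (n := 3) (by norm_num) |>.mp h
    obtain ⟨β₀, rfl⟩ := (dvd_iff_val' p hp β).mpr ((phi_zero_iff' p hp β).mp hβ)
    -- now h1 gives p * (a₀ * α^3) = 0
    have key : (p : ZMod (p^2)) * ((a₀ : ZMod (p^2)) * α^3) = 0 := by
      rw [haR] at h1
      linear_combination h1 - (b' * α^2 * β₀ + (p:ZMod (p^2)) * c' * α * β₀^2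
        + (p:ZMod (p^2)) * (d:ZMod (p^2)) * β₀^3) * hpi2
    have hα : φ α ≠ 0 := by
      intro h0
      have hu := congrArg φ huni
      simp only [map_sub, map_mul, map_one, map_zero, hφp, h0, zero_mul, mul_zero] at hu
      simp at hu
    have : φ ((a₀ : ZMod (p^2)) * α^3) = 0 :=
      (phi_zero_iff' p hp _).mpr ((pmul_zero_iff' p hp _).mp key)
    rw [map_mul, map_pow, map_intCast] at this
    rcases mul_eq_zero.mp this with h | h
    · apply hp2a
      have : (p : ℤ) ∣ a₀ := (ZMod.intCast_zmod_eq_zero_iff_dvd a₀ p).mp h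
      obtain ⟨m, hm⟩ := this
      exact ⟨m, by rw [ha₀, hm]; ring⟩
    · exact hα (pow_eq_zero_iff (n := 3) (by norm_num) |>.mp h)

/-- For a prime `p` with `p ∣ a` and `p ∤ d`, the number of pairs
`(b,c) ∈ (ℤ/p²ℤ)²` such that `ax³ + bx²y + cxy² + dy³` has a triple root at `(1,0)`
mod `p` (i.e. `p ∣ b` and `p ∣ c`) and satisfies Dedekind's criterion is `p²` if
`p` exactly divides `a`, and `0` if `p² ∣ a`. -/
theorem count_triple_root_dedekind (p : ℕ) (hp : p.Prime) (a d : ℤ)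
    (hpa : (p : ℤ) ∣ a) (hpd : ¬ (p : ℤ) ∣ d) :
    Nat.card {bc : ZMod (p ^ 2) × ZMod (p ^ 2) //
        (p : ZMod (p ^ 2)) ∣ bc.1 ∧ (p : ZMod (p ^ 2)) ∣ bc.2 ∧
        SatisfiesDedekind (p : ZMod (p ^ 2)) (a : ZMod (p ^ 2)) bc.1 bc.2
          (d : ZMod (p ^ 2))}
      = if (p : ℤ) ^ 2 ∣ a then 0 else p ^ 2 := by
  haveI : NeZero (p^2) := ⟨pow_ne_zero 2 hp.ne_zero⟩
  by_cases h2 : (p : ℤ) ^ 2 ∣ a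
  · rw [if_pos h2]
    have ha0 : (a : ZMod (p^2)) = 0 := by
      rw [ZMod.intCast_zmod_eq_zero_iff_dvd]
      push_cast
      exact h2
    have hempty : IsEmpty {bc : ZMod (p ^ 2) × ZMod (p ^ 2) //
        (p : ZMod (p ^ 2)) ∣ bc.1 ∧ (p : ZMod (p ^ 2)) ∣ bc.2 ∧
        SatisfiesDedekind (p : ZMod (p ^ 2)) (a : ZMod (p ^ 2)) bc.1 bc.2
          (d : ZMod (p ^ 2))} := by
      refine ⟨fun x => ?_⟩
      obtain ⟨⟨b, c⟩, hb, hc, hprim, hD⟩ := x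
      apply hD
      refine ⟨1, 0, 0, 1, by ring, ?_, ?_⟩
      · rw [ha0]
        refine ⟨0, by ring⟩
      · obtain ⟨b', hb'⟩ := hb
        exact ⟨b', by rw [hb']; ring⟩
    exact Nat.card_of_isEmpty
  · rw [if_neg h2]
    have hiff : ∀ bc : ZMod (p ^ 2) × ZMod (p ^ 2),
        ((p : ZMod (p ^ 2)) ∣ bc.1 ∧ (p : ZMod (p ^ 2)) ∣ bc.2 ∧
          SatisfiesDedekind (p : ZMod (p ^ 2)) (a : ZMod (p ^ 2)) bc.1 bc.2
            (d : ZMod (p ^ 2)))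
        ↔ ((p : ZMod (p ^ 2)) ∣ bc.1 ∧ (p : ZMod (p ^ 2)) ∣ bc.2) := by
      intro bc
      constructor
      · rintro ⟨h1, h2, -⟩; exact ⟨h1, h2⟩
      · rintro ⟨hb, hc⟩
        exact ⟨hb, hc, dedekind_of_exact' p hp a d hpa h2 hpd bc.1 bc.2 hb hc⟩
    rw [Nat.card_congr (Equiv.subtypeEquivRight hiff),
      Nat.card_congr (Equiv.subtypeProdEquivProd), Nat.card_prod,
      card_mult' p hp, pow_two]
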